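/- Winograd's lower bound instance: any bilinear algorithm computing the 2×2 matrix product over a field requires at least 7 multiplications, i.e., R(2,2,2) ≥ 7; combined with Strassen's algorithm, R(2,2,2) = 7. -/

import Mathlib

/-- A bilinear algorithm of rank `r` for the `m × n` by `n × p` matrix product over `F`. -/
def HasBilinearAlgo (F : Type*) [Field F] (m n p r : ℕ) : Prop :=
  ∃ (f : Fin r → (Matrix (Fin m) (Fin n) F →ₗ[F] F))
    (g : Fin r → (Matrix (Fin n) (Fin p) F →ₗ[F] F))
    (C : Fin r → Matrix (Fin m) (Fin p) F),
    ∀ A B, A * B = ∑ i, (f i A * g i B) • C i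

/-- The tensor rank of the `m × n` by `n × p` matrix multiplication over `F`. -/
noncomputable def matMulRank (F : Type*) [Field F] (m n p : ℕ) : ℕ :=
  sInf {r | HasBilinearAlgo F m n p r}

namespace W222
open Matrix Module
variable {F : Type*} [Field F]


abbrev M2 (F : Type*) [Field F] := Matrix (Fin 2) (Fin 2) F

lemma finrank_M2 : finrank F (M2 F) = 4 := by
  rw [Module.finrank_matrix]; simp






/-- cross product of two plane vectors -/
def cp (a b : Fin 2 → F) : F := a 0 * b 1 - a 1 * b 0

lemma vec2_ne_zero {a : Fin 2 → F} (h : a ≠ 0) : a 0 ≠ 0 ∨ a 1 ≠ 0 := by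
  by_contra hc
  push_neg at hc
  exact h (by ext i; fin_cases i <;> simp [hc.1, hc.2])

omit [Field F] in
lemma vec2_ext {a b : Fin 2 → F} (h0 : a 0 = b 0) (h1 : a 1 = b 1) : a = b := by
  ext i; fin_cases i <;> assumption

lemma cp_eq_zero_parallel {a b : Fin 2 → F} (hb : b ≠ 0) (h : cp a b = 0) :
    ∃ c : F, a = c • b := by
  unfold cp at h
  rcases vec2_ne_zero hb with hk | hk
  · refine ⟨a 0 / b 0, vec2_ext ?_ ?_⟩
    · show a 0 = a 0 / b 0 * b 0
      rw [div_mul_cancel₀ _ hk]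
    · show a 1 = a 0 / b 0 * b 1
      rw [div_mul_eq_mul_div, eq_div_iff hk]
      linear_combination -h
  · refine ⟨a 1 / b 1, vec2_ext ?_ ?_⟩
    · show a 0 = a 1 / b 1 * b 0
      rw [div_mul_eq_mul_div, eq_div_iff hk]
      linear_combination h
    · show a 1 = a 1 / b 1 * b 1
      rw [div_mul_cancel₀ _ hk]

lemma cp_smul {a b : Fin 2 → F} {c : F} (h : a = c • b) : cp a b = 0 := by
  subst h; unfold cp; simp; ring

/-- every vector is a combination of two non-parallel vectors -/
lemma span2 {c d : Fin 2 → F} (h : cp c d ≠ 0) (u : Fin 2 → F) :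
    ∃ a b : F, u = a • c + b • d := by
  refine ⟨cp u d / cp c d, cp c u / cp c d, vec2_ext ?_ ?_⟩
  · show u 0 = cp u d / cp c d * c 0 + cp c u / cp c d * d 0
    rw [div_mul_eq_mul_div, div_mul_eq_mul_div, ← add_div, eq_div_iff h]
    unfold cp; ring
  · show u 1 = cp u d / cp c d * c 1 + cp c u / cp c d * d 1
    rw [div_mul_eq_mul_div, div_mul_eq_mul_div, ← add_div, eq_div_iff h]
    unfold cp; ring

lemma mat2_ext {A B : M2 F} (h00 : A 0 0 = B 0 0) (h01 : A 0 1 = B 0 1)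
    (h10 : A 1 0 = B 1 0) (h11 : A 1 1 = B 1 1) : A = B := by
  ext i j; fin_cases i <;> fin_cases j <;> assumption

/-- a nonzero singular 2×2 matrix is an outer product of nonzero vectors -/
lemma rank1_decomp {A : M2 F} (hA : A ≠ 0) (hdet : A.det = 0) :
    ∃ a b : Fin 2 → F, a ≠ 0 ∧ b ≠ 0 ∧ A = vecMulVec a b := by
  rw [Matrix.det_fin_two] at hdet
  by_cases h00 : A 0 0 ≠ 0
  · refine ⟨![A 0 0, A 1 0], ![1, A 0 1 / A 0 0], ?_, ?_, ?_⟩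
    · intro h; have := congrFun h 0; simp at this; exact h00 this
    · intro h; have := congrFun h 0; simp at this
    · refine mat2_ext ?_ ?_ ?_ ?_ <;> simp [vecMulVec_apply]
      · rw [mul_div_assoc', eq_div_iff h00]; ring
      · rw [mul_div_assoc', eq_div_iff h00]; linear_combination hdet
  · push_neg at h00
    by_cases h01 : A 0 1 ≠ 0
    · have h10 : A 1 0 = 0 := by
        rw [h00] at hdet; simp at hdet
        rcases hdet with h | h
        · exact absurd h h01
        · exact h
      refine ⟨![A 0 1, A 1 1], ![0, 1], ?_, ?_, ?_⟩
      · intro h; have := congrFun h 0; simp at this; exact h01 this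
      · intro h; have := congrFun h 1; simp at this
      · refine mat2_ext ?_ ?_ ?_ ?_ <;> simp [vecMulVec_apply, h00, h10]
    · push_neg at h01
      have hrow : ¬ (A 1 0 = 0 ∧ A 1 1 = 0) := by
        intro ⟨h10, h11⟩
        exact hA (by ext i j; fin_cases i <;> fin_cases j <;> simp [h00, h01, h10, h11])
      refine ⟨![0, 1], ![A 1 0, A 1 1], ?_, ?_, ?_⟩
      · intro h; have := congrFun h 1; simp at this
      · intro h
        exact hrow ⟨congrFun h 0, congrFun h 1⟩
      · refine mat2_ext ?_ ?_ ?_ ?_ <;> simp [vecMulVec_apply, h00, h01]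

lemma det_outer_add_outer (a b c d : Fin 2 → F) :
    (vecMulVec a b + vecMulVec c d).det = cp a c * cp b d := by
  rw [Matrix.det_fin_two]
  simp [vecMulVec_apply, cp]
  ring

lemma outer_eq_outer {a b c d : Fin 2 → F} (h : vecMulVec a b = vecMulVec c d)
    (ha : a ≠ 0) (hb : b ≠ 0) :
    ∃ lam : F, lam ≠ 0 ∧ c = lam • a ∧ lam • d = b := by
  have hE : ∀ i j, a i * b j = c i * d j := by
    intro i j; have := congrFun (congrFun h i) j; simpa [vecMulVec_apply] using this
  obtain ⟨k, hk⟩ : ∃ k, a k ≠ 0 := by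
    rcases vec2_ne_zero ha with h' | h'; exacts [⟨0, h'⟩, ⟨1, h'⟩]
  obtain ⟨l, hl⟩ : ∃ l, b l ≠ 0 := by
    rcases vec2_ne_zero hb with h' | h'; exacts [⟨0, h'⟩, ⟨1, h'⟩]
  have hckdl : c k * d l ≠ 0 := by rw [← hE k l]; exact mul_ne_zero hk hl
  have hck : c k ≠ 0 := fun h0 => hckdl (by rw [h0]; ring)
  have hdl : d l ≠ 0 := fun h0 => hckdl (by rw [h0]; ring)
  refine ⟨c k / a k, div_ne_zero hck hk, ?_, ?_⟩
  · ext i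
    show c i = c k / a k * a i
    rw [div_mul_eq_mul_div, eq_div_iff hk]
    have h1 := hE i l
    have h2 := hE k l
    have hzz : c i * a k * (d l * b l) = c k * a i * (d l * b l) := by
      linear_combination (c i * d l) * h2 - (c k * d l) * h1
    have h3 := mul_right_cancel₀ (mul_ne_zero hdl hl) hzz
    linear_combination h3
  · ext j
    show c k / a k * d j = b j
    rw [div_mul_eq_mul_div, div_eq_iff hk]
    linear_combination - hE k j





/-- intersection of three kernels contains a nonzero element -/
lemma ker3_ne_zero (φ ψ χ : M2 F →ₗ[F] F) :
    ∃ A : M2 F, A ≠ 0 ∧ φ A = 0 ∧ ψ A = 0 ∧ χ A = 0 := by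
  set L : M2 F →ₗ[F] (Fin 3 → F) := LinearMap.pi ![φ, ψ, χ] with hL
  have hker : LinearMap.ker L ≠ ⊥ := by
    intro hbot
    have hinj : Function.Injective L := LinearMap.ker_eq_bot.mp hbot
    have := LinearMap.finrank_le_finrank_of_injective hinj
    rw [finrank_M2, Module.finrank_pi] at this
    simp at this
  obtain ⟨A, hA, hA0⟩ := Submodule.exists_mem_ne_zero_of_ne_bot hker
  rw [LinearMap.mem_ker] at hA
  refine ⟨A, hA0, ?_, ?_, ?_⟩
  · have := congrFun hA 0; simpa [hL] using this
  · have := congrFun hA 1; simpa [hL] using this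
  · have := congrFun hA 2; simpa [hL] using this

/-- intersection of two kernels contains two linearly independent elements -/
lemma ker2_li2 (φ ψ : M2 F →ₗ[F] F) :
    ∃ X Y : M2 F, φ X = 0 ∧ ψ X = 0 ∧ φ Y = 0 ∧ ψ Y = 0 ∧
      LinearIndependent F ![X, Y] := by
  set L : M2 F →ₗ[F] (Fin 2 → F) := LinearMap.pi ![φ, ψ] with hL
  have hrk : 2 ≤ finrank F (LinearMap.ker L) := by
    have h1 := LinearMap.finrank_range_add_finrank_ker L
    rw [finrank_M2] at h1
    have h2 : finrank F (LinearMap.range L) ≤ 2 := by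
      have := Submodule.finrank_le (LinearMap.range L)
      rwa [Module.finrank_pi, Fintype.card_fin] at this
    omega
  obtain ⟨v, hv⟩ := exists_linearIndependent_of_le_finrank hrk
  have hli : LinearIndependent F fun i => ((v i : M2 F)) :=
    hv.map' (LinearMap.ker L).subtype (Submodule.ker_subtype _)
  have hmem : ∀ i, φ (v i : M2 F) = 0 ∧ ψ (v i : M2 F) = 0 := by
    intro i
    have h := (v i).2
    rw [LinearMap.mem_ker] at h
    exact ⟨by have := congrFun h 0; simpa [hL] using this,
           by have := congrFun h 1; simpa [hL] using this⟩
  refine ⟨v 0, v 1, (hmem 0).1, (hmem 0).2, (hmem 1).1, (hmem 1).2, ?_⟩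
  have : (![((v 0 : M2 F)), ((v 1 : M2 F))] : Fin 2 → M2 F) = fun i => (v i : M2 F) := by
    funext i; fin_cases i <;> rfl
  rw [this]
  exact hli

/-- kernel of a single functional contains three linearly independent elements -/
lemma ker1_li3 (φ : M2 F →ₗ[F] F) :
    ∃ X Y Z : M2 F, φ X = 0 ∧ φ Y = 0 ∧ φ Z = 0 ∧
      LinearIndependent F ![X, Y, Z] := by
  have hrk : 3 ≤ finrank F (LinearMap.ker φ) := by
    have h1 := LinearMap.finrank_range_add_finrank_ker φ
    rw [finrank_M2] at h1
    have h2 : finrank F (LinearMap.range φ) ≤ 1 := by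
      have := Submodule.finrank_le (LinearMap.range φ)
      rwa [Module.finrank_self] at this
    omega
  obtain ⟨v, hv⟩ := exists_linearIndependent_of_le_finrank hrk
  have hli : LinearIndependent F fun i => ((v i : M2 F)) :=
    hv.map' (LinearMap.ker φ).subtype (Submodule.ker_subtype _)
  have hmem : ∀ i, φ (v i : M2 F) = 0 := fun i => LinearMap.mem_ker.mp (v i).2
  refine ⟨v 0, v 1, v 2, hmem 0, hmem 1, hmem 2, ?_⟩
  have : (![((v 0 : M2 F)), (v 1 : M2 F), (v 2 : M2 F)] : Fin 3 → M2 F)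
      = fun i => (v i : M2 F) := by
    funext i; fin_cases i <;> rfl
  rw [this]
  exact hli

/-- duality: if the four functionals have trivial common kernel, a linear relation
among them is trivial -/
lemma coeffs_zero (g0 g1 g2 g3 : M2 F →ₗ[F] F)
    (hker : ∀ B : M2 F, g0 B = 0 → g1 B = 0 → g2 B = 0 → g3 B = 0 → B = 0)
    (c0 c1 c2 c3 : F)
    (hrel : ∀ B : M2 F, c0 * g0 B + c1 * g1 B + c2 * g2 B + c3 * g3 B = 0) :
    c0 = 0 ∧ c1 = 0 ∧ c2 = 0 ∧ c3 = 0 := by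
  set L : M2 F →ₗ[F] (Fin 4 → F) := LinearMap.pi ![g0, g1, g2, g3] with hL
  have hinj : Function.Injective L := by
    rw [← LinearMap.ker_eq_bot, Submodule.eq_bot_iff]
    intro B hB
    rw [LinearMap.mem_ker] at hB
    exact hker B (by have := congrFun hB 0; simpa [hL] using this)
      (by have := congrFun hB 1; simpa [hL] using this)
      (by have := congrFun hB 2; simpa [hL] using this)
      (by have := congrFun hB 3; simpa [hL] using this)
  have hsurj : Function.Surjective L := by
    rw [← LinearMap.injective_iff_surjective_of_finrank_eq_finrank]
    · exact hinj
    · rw [finrank_M2, Module.finrank_pi, Fintype.card_fin]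
  have get : ∀ i : Fin 4, ∃ B : M2 F, ∀ y : Fin 4 → F, y = Pi.single i (1:F) →
      g0 B = y 0 ∧ g1 B = y 1 ∧ g2 B = y 2 ∧ g3 B = y 3 := by
    intro i
    obtain ⟨B, hB⟩ := hsurj (Pi.single i 1)
    refine ⟨B, fun y hy => ?_⟩
    subst hy
    refine ⟨?_, ?_, ?_, ?_⟩
    · have := congrFun hB 0; simpa [hL] using this
    · have := congrFun hB 1; simpa [hL] using this
    · have := congrFun hB 2; simpa [hL] using this
    · have := congrFun hB 3; simpa [hL] using this
  refine ⟨?_, ?_, ?_, ?_⟩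
  · obtain ⟨B, hB⟩ := get 0
    obtain ⟨h0, h1, h2, h3⟩ := hB (Pi.single 0 1) rfl
    have := hrel B; rw [h0, h1, h2, h3] at this; simpa using this
  · obtain ⟨B, hB⟩ := get 1
    obtain ⟨h0, h1, h2, h3⟩ := hB (Pi.single 1 1) rfl
    have := hrel B; rw [h0, h1, h2, h3] at this; simpa using this
  · obtain ⟨B, hB⟩ := get 2
    obtain ⟨h0, h1, h2, h3⟩ := hB (Pi.single 2 1) rfl
    have := hrel B; rw [h0, h1, h2, h3] at this; simpa using this
  · obtain ⟨B, hB⟩ := get 3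
    obtain ⟨h0, h1, h2, h3⟩ := hB (Pi.single 3 1) rfl
    have := hrel B; rw [h0, h1, h2, h3] at this; simpa using this



/-- outer product times matrix -/
lemma vecMulVec_mul (v u : Fin 2 → F) (B : M2 F) :
    vecMulVec v u * B = vecMulVec v (vecMul u B) := by
  ext k l
  simp [Matrix.mul_apply, vecMulVec_apply, vecMul, dotProduct, Fin.sum_univ_two]
  ring

lemma vecMul_single (m : Fin 2) (B : M2 F) :
    vecMul (Pi.single m (1:F)) B = fun l => B m l := by
  funext l
  simp [vecMul, dotProduct, Fin.sum_univ_two]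
  fin_cases m <;> simp

def Decomp (f g : Fin 6 → (M2 F →ₗ[F] F)) (C : Fin 6 → M2 F) : Prop :=
  ∀ A B : M2 F, A * B = ∑ i, (f i A * g i B) • C i

lemma Decomp.perm {f g : Fin 6 → (M2 F →ₗ[F] F)} {C : Fin 6 → M2 F}
    (hd : Decomp f g C) (σ : Equiv.Perm (Fin 6)) :
    Decomp (f ∘ σ) (g ∘ σ) (C ∘ σ) := by
  intro A B
  rw [hd A B]
  exact (Equiv.sum_comp σ fun i => (f i A * g i B) • C i).symm

def tLM : M2 F →ₗ[F] M2 F where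
  toFun := fun A => Aᵀ
  map_add' := by intros; simp [Matrix.transpose_add]
  map_smul' := by intros; simp [Matrix.transpose_smul]

lemma Decomp.transpose {f g : Fin 6 → (M2 F →ₗ[F] F)} {C : Fin 6 → M2 F}
    (hd : Decomp f g C) :
    Decomp (fun i => (g i).comp tLM) (fun i => (f i).comp tLM) (fun i => (C i)ᵀ) := by
  intro A B
  have h := hd Bᵀ Aᵀ
  have h2 := congrArg Matrix.transpose h
  rw [Matrix.transpose_mul, Matrix.transpose_transpose, Matrix.transpose_transpose] at h2
  rw [h2]
  rw [Matrix.transpose_sum]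
  congr 1
  funext i
  simp [tLM]
  rw [mul_comm]; rfl

lemma span_f {f g : Fin 6 → (M2 F →ₗ[F] F)} {C : Fin 6 → M2 F}
    (hd : Decomp f g C) {A : M2 F} (h : ∀ i, f i A = 0) : A = 0 := by
  have := hd A 1
  rw [mul_one] at this
  rw [this]
  apply Finset.sum_eq_zero
  intro i _
  rw [h i]
  simp

lemma span_g {f g : Fin 6 → (M2 F →ₗ[F] F)} {C : Fin 6 → M2 F}
    (hd : Decomp f g C) {B : M2 F} (h : ∀ i, g i B = 0) : B = 0 := by
  have := hd 1 B
  rw [one_mul] at this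
  rw [this]
  apply Finset.sum_eq_zero
  intro i _
  rw [h i]
  simp

/-- Lemma A: if two of the `f`-functionals both vanish on a common "column plane"
`{v uᵀ : u}`, the 6-term decomposition is impossible. -/
theorem lemA {f g : Fin 6 → (M2 F →ₗ[F] F)} {C : Fin 6 → M2 F}
    (hd : Decomp f g C) (v : Fin 2 → F) (hv : v ≠ 0)
    (h4 : ∀ u, f 4 (vecMulVec v u) = 0) (h5 : ∀ u, f 5 (vecMulVec v u) = 0) :
    False := by
  have key : ∀ (u : Fin 2 → F) (B : M2 F),
      vecMulVec v (vecMul u B)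
        = (f 0 (vecMulVec v u) * g 0 B) • C 0 + (f 1 (vecMulVec v u) * g 1 B) • C 1
          + (f 2 (vecMulVec v u) * g 2 B) • C 2 + (f 3 (vecMulVec v u) * g 3 B) • C 3 := by
    intro u B
    have h := hd (vecMulVec v u) B
    rw [vecMulVec_mul] at h
    rw [h, Fin.sum_univ_six, h4, h5, zero_mul, zero_mul, zero_smul, zero_smul,
      add_zero, add_zero]
  obtain ⟨k₀, hk₀⟩ : ∃ k, v k ≠ 0 := by
    rcases vec2_ne_zero hv with h | h; exacts [⟨0, h⟩, ⟨1, h⟩]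
  have kill : ∀ B : M2 F, (∀ u : Fin 2 → F, vecMulVec v (vecMul u B) = 0) → B = 0 := by
    intro B hB
    ext m l
    have h := congrFun (congrFun (hB (Pi.single m 1)) k₀) l
    rw [vecMul_single] at h
    have h2 : v k₀ * B m l = 0 := by simpa [vecMulVec_apply] using h
    simpa using (mul_eq_zero.mp h2).resolve_left hk₀
  have a2 : ∀ B : M2 F, g 0 B = 0 → g 1 B = 0 → g 2 B = 0 → g 3 B = 0 → B = 0 := by
    intro B h0 h1 h2 h3
    apply kill
    intro u
    rw [key u B, h0, h1, h2, h3]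
    simp
  have a1 : ∀ i : Fin 6, i ≠ 4 → i ≠ 5 → ∃ u, f i (vecMulVec v u) ≠ 0 := by
    intro i hi4 hi5
    by_contra hc
    push_neg at hc
    fin_cases i
    · obtain ⟨B₀, hB₀, hg1, hg2, hg3⟩ := ker3_ne_zero (g 1) (g 2) (g 3)
      have hc' : ∀ u, f 0 (vecMulVec v u) = 0 := hc
      refine hB₀ (kill B₀ fun u => ?_)
      rw [key u B₀, hc', hg1, hg2, hg3]; simp
    · obtain ⟨B₀, hB₀, hg1, hg2, hg3⟩ := ker3_ne_zero (g 0) (g 2) (g 3)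
      have hc' : ∀ u, f 1 (vecMulVec v u) = 0 := hc
      refine hB₀ (kill B₀ fun u => ?_)
      rw [key u B₀, hc', hg1, hg2, hg3]; simp
    · obtain ⟨B₀, hB₀, hg1, hg2, hg3⟩ := ker3_ne_zero (g 0) (g 1) (g 3)
      have hc' : ∀ u, f 2 (vecMulVec v u) = 0 := hc
      refine hB₀ (kill B₀ fun u => ?_)
      rw [key u B₀, hc', hg1, hg2, hg3]; simp
    · obtain ⟨B₀, hB₀, hg1, hg2, hg3⟩ := ker3_ne_zero (g 0) (g 1) (g 2)
      have hc' : ∀ u, f 3 (vecMulVec v u) = 0 := hc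
      refine hB₀ (kill B₀ fun u => ?_)
      rw [key u B₀, hc', hg1, hg2, hg3]; simp
    · exact absurd rfl hi4
    · exact absurd rfl hi5
  set w : Fin 2 → F := ![v 1, -v 0] with hw
  have b : ∀ i : Fin 6, i ≠ 4 → i ≠ 5 → ∀ l : Fin 2,
      w 0 * C i 0 l + w 1 * C i 1 l = 0 := by
    intro i hi4 hi5 l
    obtain ⟨u₀, hu₀⟩ := a1 i hi4 hi5
    have lam : ∀ (u : Fin 2 → F) (B : M2 F),
        (f 0 (vecMulVec v u) * (w 0 * C 0 0 l + w 1 * C 0 1 l)) * g 0 B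
        + (f 1 (vecMulVec v u) * (w 0 * C 1 0 l + w 1 * C 1 1 l)) * g 1 B
        + (f 2 (vecMulVec v u) * (w 0 * C 2 0 l + w 1 * C 2 1 l)) * g 2 B
        + (f 3 (vecMulVec v u) * (w 0 * C 3 0 l + w 1 * C 3 1 l)) * g 3 B = 0 := by
      intro u B
      have e0 := congrFun (congrFun (key u B) 0) l
      have e1 := congrFun (congrFun (key u B) 1) l
      simp only [Matrix.add_apply, Matrix.smul_apply, vecMulVec_apply, smul_eq_mul] at e0 e1
      have hwv : w 0 * (v 0 * vecMul u B l) + w 1 * (v 1 * vecMul u B l) = 0 := by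
        rw [hw]; simp; ring
      rw [e0, e1] at hwv
      linear_combination hwv
    have cz := fun u => coeffs_zero (g 0) (g 1) (g 2) (g 3) a2
      (f 0 (vecMulVec v u) * (w 0 * C 0 0 l + w 1 * C 0 1 l))
      (f 1 (vecMulVec v u) * (w 0 * C 1 0 l + w 1 * C 1 1 l))
      (f 2 (vecMulVec v u) * (w 0 * C 2 0 l + w 1 * C 2 1 l))
      (f 3 (vecMulVec v u) * (w 0 * C 3 0 l + w 1 * C 3 1 l))
      (fun B => by linear_combination lam u B)
    fin_cases i
    · exact (mul_eq_zero.mp ((cz u₀).1)).resolve_left hu₀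
    · exact (mul_eq_zero.mp ((cz u₀).2.1)).resolve_left hu₀
    · exact (mul_eq_zero.mp ((cz u₀).2.2.1)).resolve_left hu₀
    · exact (mul_eq_zero.mp ((cz u₀).2.2.2)).resolve_left hu₀
    · exact absurd rfl hi4
    · exact absurd rfl hi5
  obtain ⟨B₀, hB₀, hg4, hg5, -⟩ := ker3_ne_zero (g 4) (g 5) (g 5)
  apply hB₀
  have hwAB : ∀ A : M2 F, ∀ l : Fin 2,
      w 0 * (A * B₀) 0 l + w 1 * (A * B₀) 1 l = 0 := by
    intro A l
    have h := hd A B₀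
    rw [Fin.sum_univ_six] at h
    have e0 := congrFun (congrFun h 0) l
    have e1 := congrFun (congrFun h 1) l
    simp only [Matrix.add_apply, Matrix.smul_apply, smul_eq_mul, hg4, hg5] at e0 e1
    rw [e0, e1]
    have b0 := b 0 (by decide) (by decide) l
    have b1 := b 1 (by decide) (by decide) l
    have b2 := b 2 (by decide) (by decide) l
    have b3 := b 3 (by decide) (by decide) l
    linear_combination (f 0 A * g 0 B₀) * b0 + (f 1 A * g 1 B₀) * b1
      + (f 2 A * g 2 B₀) * b2 + (f 3 A * g 3 B₀) * b3
  have hwne : w 0 ≠ 0 ∨ w 1 ≠ 0 := by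
    rcases vec2_ne_zero hv with h | h
    · right; rw [hw]; simpa using h
    · left; rw [hw]; simpa using h
  obtain ⟨c, hc⟩ : ∃ c : Fin 2 → F, w 0 * c 0 + w 1 * c 1 = 1 := by
    rcases hwne with h | h
    · exact ⟨![1 / w 0, 0], by simp [h]⟩
    · exact ⟨![0, 1 / w 1], by simp [h]⟩
  ext m l
  have hA := hwAB (vecMulVec c (Pi.single m 1)) l
  rw [vecMulVec_mul, vecMul_single] at hA
  simp only [vecMulVec_apply] at hA
  have hfin : (w 0 * c 0 + w 1 * c 1) * B₀ m l = 0 := by linear_combination hA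
  rw [hc] at hfin
  simpa using hfin

def combo3 (P Q R : M2 F) : (Fin 3 → F) →ₗ[F] M2 F where
  toFun := fun c => c 0 • P + c 1 • Q + c 2 • R
  map_add' := by intros x y; simp only [Pi.add_apply, add_smul]; abel
  map_smul' := by
    intros m c
    simp only [Pi.smul_apply, smul_eq_mul, RingHom.id_apply, smul_add, smul_smul]

def combo4 (P Q R S : M2 F) : (Fin 4 → F) →ₗ[F] M2 F where
  toFun := fun c => c 0 • P + c 1 • Q + c 2 • R + c 3 • S
  map_add' := by intros x y; simp only [Pi.add_apply, add_smul]; abel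
  map_smul' := by
    intros m c
    simp only [Pi.smul_apply, smul_eq_mul, RingHom.id_apply, smul_add, smul_smul]

lemma not_span3 (P Q R : M2 F) :
    ¬ (∀ X : M2 F, ∃ c1 c2 c3 : F, X = c1 • P + c2 • Q + c3 • R) := by
  intro h
  have hsurj : Function.Surjective (combo3 P Q R) := by
    intro X
    obtain ⟨c1, c2, c3, hc⟩ := h X
    exact ⟨![c1, c2, c3], by simp [combo3, hc]⟩
  have h1 := LinearMap.finrank_range_add_finrank_ker (combo3 P Q R)
  rw [LinearMap.range_eq_top.mpr hsurj] at h1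
  rw [finrank_top, finrank_M2, Module.finrank_pi] at h1
  simp at h1
  omega

lemma quad_rel {C0 C1 C2 C3 : M2 F}
    (hs : ∀ X : M2 F, ∃ c0 c1 c2 c3 : F, X = c0 • C0 + c1 • C1 + c2 • C2 + c3 • C3)
    {d0 d1 d2 d3 : F} (h : d0 • C0 + d1 • C1 + d2 • C2 + d3 • C3 = 0) :
    d0 = 0 ∧ d1 = 0 ∧ d2 = 0 ∧ d3 = 0 := by
  have hsurj : Function.Surjective (combo4 C0 C1 C2 C3) := by
    intro X
    obtain ⟨c0, c1, c2, c3, hc⟩ := hs X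
    exact ⟨![c0, c1, c2, c3], by simp [combo4, hc]⟩
  have hinj : Function.Injective (combo4 C0 C1 C2 C3) := by
    rw [LinearMap.injective_iff_surjective_of_finrank_eq_finrank]
    · exact hsurj
    · rw [finrank_M2, Module.finrank_pi]; simp
  have h0 : combo4 C0 C1 C2 C3 ![d0, d1, d2, d3] = combo4 C0 C1 C2 C3 0 := by
    show d0 • C0 + d1 • C1 + d2 • C2 + d3 • C3
      = (0:F) • C0 + (0:F) • C1 + (0:F) • C2 + (0:F) • C3
    rw [h]
    simp
  have hr := hinj h0
  refine ⟨?_, ?_, ?_, ?_⟩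
  · have := congrFun hr 0; simpa using this
  · have := congrFun hr 1; simpa using this
  · have := congrFun hr 2; simpa using this
  · have := congrFun hr 3; simpa using this

lemma skew_of {bi ai : F} (hbi : bi ≠ 0) (φ ψ : M2 F → F)
    (hc : ∀ X, φ X * bi = ai * ψ X) (X Y : M2 F) :
    φ X * ψ Y = φ Y * ψ X := by
  have h1 := hc X
  have h2 := hc Y
  have h3 : bi * (φ X * ψ Y - φ Y * ψ X) = 0 := by
    linear_combination ψ Y * h1 - ψ X * h2
  have h4 := (mul_eq_zero.mp h3).resolve_left hbi
  linear_combination h4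

theorem lemB {f g : Fin 6 → (M2 F →ₗ[F] F)} {C : Fin 6 → M2 F}
    (hd : Decomp f g C) (A₀ B₀ : M2 F) (hA₀ : IsUnit A₀.det) (hB₀ : IsUnit B₀.det)
    (hf4 : f 4 A₀ = 0) (hf5 : f 5 A₀ = 0) (hg4 : g 4 B₀ = 0) (hg5 : g 5 B₀ = 0) :
    False := by
  -- transformed decomposition data
  let f' : Fin 6 → M2 F → F := fun i A => f i (A₀ * A)
  let g' : Fin 6 → M2 F → F := fun i B => g i (B * B₀)
  let D : Fin 6 → M2 F := fun i => A₀⁻¹ * (C i * B₀⁻¹)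
  have d : ∀ A B : M2 F, A * B
      = (f' 0 A * g' 0 B) • D 0 + (f' 1 A * g' 1 B) • D 1 + (f' 2 A * g' 2 B) • D 2
        + (f' 3 A * g' 3 B) • D 3 + (f' 4 A * g' 4 B) • D 4 + (f' 5 A * g' 5 B) • D 5 := by
    intro A B
    have h := hd (A₀ * A) (B * B₀)
    rw [Fin.sum_univ_six] at h
    have e1 : A₀⁻¹ * ((A₀ * A) * (B * B₀)) * B₀⁻¹ = A * B := by
      rw [← Matrix.mul_assoc, ← Matrix.mul_assoc, ← Matrix.mul_assoc,
        Matrix.nonsing_inv_mul _ hA₀, Matrix.one_mul, Matrix.mul_assoc (A*B),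
        Matrix.mul_nonsing_inv _ hB₀, Matrix.mul_one]
    rw [← e1, h]
    show A₀⁻¹ * (_ + _ + _ + _ + _ + _) * B₀⁻¹ = _
    simp only [Matrix.add_mul, Matrix.mul_add, Matrix.smul_mul, Matrix.mul_smul,
      Matrix.mul_assoc]
    rfl
  have hg'45 : g' 4 1 = 0 ∧ g' 5 1 = 0 := by
    constructor <;> show g _ (1 * B₀) = 0 <;> rw [Matrix.one_mul] <;> assumption
  have hf'45 : f' 4 1 = 0 ∧ f' 5 1 = 0 := by
    constructor <;> show f _ (A₀ * 1) = 0 <;> rw [Matrix.mul_one] <;> assumption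
  have expandX : ∀ X : M2 F, X = (f' 0 X * g' 0 1) • D 0 + (f' 1 X * g' 1 1) • D 1
      + (f' 2 X * g' 2 1) • D 2 + (f' 3 X * g' 3 1) • D 3 := by
    intro X
    have h := d X 1
    rw [mul_one, hg'45.1, hg'45.2] at h
    simpa using h
  have expandY : ∀ X : M2 F, X = (f' 0 1 * g' 0 X) • D 0 + (f' 1 1 * g' 1 X) • D 1
      + (f' 2 1 * g' 2 X) • D 2 + (f' 3 1 * g' 3 X) • D 3 := by
    intro X
    have h := d 1 X
    rw [one_mul, hf'45.1, hf'45.2] at h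
    simpa using h
  -- the g' i 1 are nonzero for i < 4
  have hb0 : g' 0 1 ≠ 0 := by
    intro h0
    refine not_span3 (D 1) (D 2) (D 3) (fun X => ?_)
    refine ⟨f' 1 X * g' 1 1, f' 2 X * g' 2 1, f' 3 X * g' 3 1, ?_⟩
    have hh := expandX X
    rw [h0] at hh
    simpa using hh
  have hb1 : g' 1 1 ≠ 0 := by
    intro h0
    refine not_span3 (D 0) (D 2) (D 3) (fun X => ?_)
    refine ⟨f' 0 X * g' 0 1, f' 2 X * g' 2 1, f' 3 X * g' 3 1, ?_⟩
    have hh := expandX X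
    rw [h0] at hh
    simpa using hh
  have hb2 : g' 2 1 ≠ 0 := by
    intro h0
    refine not_span3 (D 0) (D 1) (D 3) (fun X => ?_)
    refine ⟨f' 0 X * g' 0 1, f' 1 X * g' 1 1, f' 3 X * g' 3 1, ?_⟩
    have hh := expandX X
    rw [h0] at hh
    simpa using hh
  have hb3 : g' 3 1 ≠ 0 := by
    intro h0
    refine not_span3 (D 0) (D 1) (D 2) (fun X => ?_)
    refine ⟨f' 0 X * g' 0 1, f' 1 X * g' 1 1, f' 2 X * g' 2 1, ?_⟩
    have hh := expandX X
    rw [h0] at hh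
    simpa using hh
  -- coefficient identification
  have hs : ∀ X : M2 F, ∃ c0 c1 c2 c3 : F,
      X = c0 • D 0 + c1 • D 1 + c2 • D 2 + c3 • D 3 :=
    fun X => ⟨_, _, _, _, expandX X⟩
  have coefeq : ∀ X : M2 F,
      (f' 0 X * g' 0 1 = f' 0 1 * g' 0 X) ∧ (f' 1 X * g' 1 1 = f' 1 1 * g' 1 X)
      ∧ (f' 2 X * g' 2 1 = f' 2 1 * g' 2 X) ∧ (f' 3 X * g' 3 1 = f' 3 1 * g' 3 X) := by
    intro X
    have hrel : (f' 0 X * g' 0 1 - f' 0 1 * g' 0 X) • D 0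
        + (f' 1 X * g' 1 1 - f' 1 1 * g' 1 X) • D 1
        + (f' 2 X * g' 2 1 - f' 2 1 * g' 2 X) • D 2
        + (f' 3 X * g' 3 1 - f' 3 1 * g' 3 X) • D 3 = 0 := by
      simp only [sub_smul]
      have h1 := (expandX X).symm
      have h2 := (expandY X).symm
      calc _ = ((f' 0 X * g' 0 1) • D 0 + (f' 1 X * g' 1 1) • D 1 + (f' 2 X * g' 2 1) • D 2
            + (f' 3 X * g' 3 1) • D 3)
          - ((f' 0 1 * g' 0 X) • D 0 + (f' 1 1 * g' 1 X) • D 1 + (f' 2 1 * g' 2 X) • D 2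
            + (f' 3 1 * g' 3 X) • D 3) := by abel
        _ = X - X := by rw [h1, h2]
        _ = 0 := sub_self X
    obtain ⟨e0, e1, e2, e3⟩ := quad_rel hs hrel
    exact ⟨by linear_combination e0, by linear_combination e1, by linear_combination e2, by linear_combination e3⟩
  -- every commutator lies in span {D 4, D 5}
  have comm : ∀ X Y : M2 F, ∃ p q : F, X * Y - Y * X = p • D 4 + q • D 5 := by
    intro X Y
    refine ⟨f' 4 X * g' 4 Y - f' 4 Y * g' 4 X, f' 5 X * g' 5 Y - f' 5 Y * g' 5 X, ?_⟩
    have h1 := d X Y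
    have h2 := d Y X
    have s0 := skew_of hb0 (f' 0) (g' 0) (fun Z => (coefeq Z).1) X Y
    have s1 := skew_of hb1 (f' 1) (g' 1) (fun Z => (coefeq Z).2.1) X Y
    have s2 := skew_of hb2 (f' 2) (g' 2) (fun Z => (coefeq Z).2.2.1) X Y
    have s3 := skew_of hb3 (f' 3) (g' 3) (fun Z => (coefeq Z).2.2.2) X Y
    rw [h1, h2, sub_smul, sub_smul, s0, s1, s2, s3]
    abel
  -- three specific commutators
  have hE1 : (Matrix.single 0 0 1 : M2 F) * Matrix.single 0 1 1
      - Matrix.single 0 1 1 * Matrix.single 0 0 1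
      = Matrix.single 0 1 1 := by
    ext i j
    fin_cases i <;> fin_cases j <;>
      simp [Matrix.mul_apply, Matrix.single, Fin.sum_univ_two]
  have hE2 : (Matrix.single 1 0 1 : M2 F) * Matrix.single 0 0 1
      - Matrix.single 0 0 1 * Matrix.single 1 0 1
      = Matrix.single 1 0 1 := by
    ext i j
    fin_cases i <;> fin_cases j <;>
      simp [Matrix.mul_apply, Matrix.single, Fin.sum_univ_two]
  have hE3 : (Matrix.single 0 1 1 : M2 F) * Matrix.single 1 0 1
      - Matrix.single 1 0 1 * Matrix.single 0 1 1
      = Matrix.single 0 0 1 - Matrix.single 1 1 1 := by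
    ext i j
    fin_cases i <;> fin_cases j <;>
      simp [Matrix.mul_apply, Matrix.single, Fin.sum_univ_two]
  obtain ⟨p1, q1, hc1⟩ := comm (Matrix.single 0 0 1) (Matrix.single 0 1 1)
  obtain ⟨p2, q2, hc2⟩ := comm (Matrix.single 1 0 1) (Matrix.single 0 0 1)
  obtain ⟨p3, q3, hc3⟩ := comm (Matrix.single 0 1 1) (Matrix.single 1 0 1)
  rw [hE1] at hc1
  rw [hE2] at hc2
  rw [hE3] at hc3
  clear d expandX expandY hs coefeq comm hE1 hE2 hE3
  -- contradiction: E01, E10, E00 - E11 cannot all lie in a plane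
  by_cases hcp : cp ![p1, q1] ![p2, q2] ≠ 0
  · obtain ⟨x, y, hxy⟩ := span2 hcp ![p3, q3]
    have h30 : p3 = x * p1 + y * p2 := by
      have := congrFun hxy 0; simpa using this
    have h31 : q3 = x * q1 + y * q2 := by
      have := congrFun hxy 1; simpa using this
    have hfin : (Matrix.single 0 0 1 : M2 F) - Matrix.single 1 1 1
        = x • Matrix.single 0 1 1 + y • Matrix.single 1 0 1 := by
      rw [hc1, hc2, hc3, h30, h31]
      simp only [smul_add, smul_smul, add_smul]
      abel
    have h00 := congrFun (congrFun hfin 0) 0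
    simp [Matrix.single] at h00
  · push_neg at hcp
    by_cases h2z : (![p2, q2] : Fin 2 → F) = 0
    · have hp2 : p2 = 0 := by have := congrFun h2z 0; simpa using this
      have hq2 : q2 = 0 := by have := congrFun h2z 1; simpa using this
      rw [hp2, hq2] at hc2
      simp only [zero_smul, add_zero] at hc2
      have h10 := congrFun (congrFun hc2 1) 0
      simp [Matrix.single] at h10
    · obtain ⟨c, hcc⟩ := cp_eq_zero_parallel h2z hcp
      have hp1 : p1 = c * p2 := by have := congrFun hcc 0; simpa using this
      have hq1 : q1 = c * q2 := by have := congrFun hcc 1; simpa using this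
      have hfin : (Matrix.single 0 1 1 : M2 F) = c • Matrix.single 1 0 1 := by
        rw [hc1, hc2, hp1, hq1]
        simp only [smul_add, smul_smul]
      have h01 := congrFun (congrFun hfin 0) 1
      simp [Matrix.single] at h01

lemma vecMulVec_smul_right (v u : Fin 2 → F) (c : F) :
    vecMulVec v (c • u) = c • vecMulVec v u := by
  ext k l; simp [vecMulVec_apply]; ring

lemma vecMulVec_smul_left (v u : Fin 2 → F) (c : F) :
    vecMulVec (c • v) u = c • vecMulVec v u := by
  ext k l; simp [vecMulVec_apply]; ring

lemma vecMulVec_comb (v x y : Fin 2 → F) (a b : F) :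
    vecMulVec v (a • x + b • y) = a • vecMulVec v x + b • vecMulVec v y := by
  ext k l; simp [vecMulVec_apply]; ring

lemma vecMulVec_comb' (x y w : Fin 2 → F) (a b : F) :
    vecMulVec (a • x + b • y) w = a • vecMulVec x w + b • vecMulVec y w := by
  ext k l; simp [vecMulVec_apply]; ring

lemma vecMulVec_transpose (a b : Fin 2 → F) :
    (vecMulVec a b)ᵀ = vecMulVec b a := by
  ext k l; simp [vecMulVec_apply]; ring

/-- concrete linear independence of a pair -/
lemma cp_swap {a b : Fin 2 → F} (h : cp a b = 0) : cp b a = 0 := by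
  unfold cp at *; linear_combination -h

lemma li2_concrete {X Y : M2 F} (h : LinearIndependent F ![X, Y]) :
    ∀ a b : F, a • X + b • Y = 0 → a = 0 ∧ b = 0 := by
  intro a b hab
  have := Fintype.linearIndependent_iff.mp h ![a, b] ?_ 
  · exact ⟨this 0, this 1⟩
  · rw [Fin.sum_univ_two]
    simpa using hab

/-- classification of singular planes -/
lemma sing_classify {X Y : M2 F}
    (hli : ∀ a b : F, a • X + b • Y = 0 → a = 0 ∧ b = 0)
    (hsing : ∀ a b : F, (a • X + b • Y).det = 0) :
    (∃ v : Fin 2 → F, v ≠ 0 ∧ ∀ u, ∃ a b : F, vecMulVec v u = a • X + b • Y) ∨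
    (∃ w : Fin 2 → F, w ≠ 0 ∧ ∀ u, ∃ a b : F, vecMulVec u w = a • X + b • Y) := by
  have hX0 : X ≠ 0 := by
    intro h
    have := (hli 1 0 (by rw [h]; simp)).1
    simp at this
  have hY0 : Y ≠ 0 := by
    intro h
    have := (hli 0 1 (by rw [h]; simp)).2
    simp at this
  have hdX : X.det = 0 := by have := hsing 1 0; simpa using this
  have hdY : Y.det = 0 := by have := hsing 0 1; simpa using this
  obtain ⟨x1, x2, hx1, hx2, hX⟩ := rank1_decomp hX0 hdX
  obtain ⟨y1, y2, hy1, hy2, hY⟩ := rank1_decomp hY0 hdY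
  have hXY : (X + Y).det = 0 := by have := hsing 1 1; simpa using this
  rw [hX, hY, det_outer_add_outer] at hXY
  rcases mul_eq_zero.mp hXY with hc | hc
  · -- common column direction : type C with v = x1
    left
    obtain ⟨c, hcc⟩ := cp_eq_zero_parallel hx1 (cp_swap hc)
    have hcne : c ≠ 0 := by
      intro h0; rw [h0] at hcc; simp at hcc; exact hy1 hcc
    refine ⟨x1, hx1, ?_⟩
    -- Y = vecMulVec x1 (c • y2)
    have hY' : Y = vecMulVec x1 (c • y2) := by
      rw [hY, hcc, vecMulVec_smul_left, vecMulVec_smul_right]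
    have hspan : cp x2 (c • y2) ≠ 0 := by
      intro h0
      have hcy2 : c • y2 ≠ 0 := smul_ne_zero hcne hy2
      obtain ⟨dd, hd⟩ := cp_eq_zero_parallel hcy2 h0
      -- X = dd • Y , contradicting independence
      have : (1:F) • X + (-dd) • Y = 0 := by
        rw [hX, hY', hd, vecMulVec_smul_right]
        simp
      have h1 := (hli 1 (-dd) this).1
      simp at h1
    intro u
    obtain ⟨a, b, hab⟩ := span2 hspan u
    refine ⟨a, b, ?_⟩
    rw [hab, vecMulVec_comb, ← hX, ← hY']
  · -- common row direction : type R with w = x2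
    right
    obtain ⟨c, hcc⟩ := cp_eq_zero_parallel hx2 (cp_swap hc)
    have hcne : c ≠ 0 := by
      intro h0; rw [h0] at hcc; simp at hcc; exact hy2 hcc
    refine ⟨x2, hx2, ?_⟩
    have hY' : Y = vecMulVec (c • y1) x2 := by
      rw [hY, hcc, vecMulVec_smul_left, vecMulVec_smul_right]
    have hspan : cp x1 (c • y1) ≠ 0 := by
      intro h0
      have hcy1 : c • y1 ≠ 0 := smul_ne_zero hcne hy1
      obtain ⟨dd, hd⟩ := cp_eq_zero_parallel hcy1 h0
      have : (1:F) • X + (-dd) • Y = 0 := by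
        rw [hX, hY', hd, vecMulVec_smul_left]
        simp
      have h1 := (hli 1 (-dd) this).1
      simp at h1
    intro u
    obtain ⟨a, b, hab⟩ := span2 hspan u
    refine ⟨a, b, ?_⟩
    rw [hab, vecMulVec_comb', ← hX, ← hY']

/-- the bilinear functional  A ↦ sᵀ A z -/
def bform (s z : Fin 2 → F) (A : M2 F) : F :=
  s 0 * (A 0 0 * z 0 + A 0 1 * z 1) + s 1 * (A 1 0 * z 0 + A 1 1 * z 1)

lemma bform_zero_left (z : Fin 2 → F) (A : M2 F) : bform 0 z A = 0 := by
  simp [bform]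

lemma bform_zero_right (s : Fin 2 → F) (A : M2 F) : bform s 0 A = 0 := by
  simp [bform]

lemma bform_outer (s z c u : Fin 2 → F) :
    bform s z (vecMulVec c u) = (s 0 * c 0 + s 1 * c 1) * (u 0 * z 0 + u 1 * z 1) := by
  simp [bform, vecMulVec_apply]; ring

lemma bform_smul_move (lam : F) (s z : Fin 2 → F) (A : M2 F) :
    bform s (lam • z) A = bform (lam • s) z A := by
  simp [bform]; ring

/-- expansion of a linear functional via the standard basis -/
lemma phi_expand (φ : M2 F →ₗ[F] F) (A : M2 F) :
    φ A = A 0 0 * φ (Matrix.single 0 0 1) + A 0 1 * φ (Matrix.single 0 1 1)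
      + A 1 0 * φ (Matrix.single 1 0 1) + A 1 1 * φ (Matrix.single 1 1 1) := by
  have hA : A = A 0 0 • Matrix.single 0 0 1 + A 0 1 • Matrix.single 0 1 1
      + A 1 0 • Matrix.single 1 0 1 + A 1 1 • Matrix.single 1 1 1 := by
    refine mat2_ext ?_ ?_ ?_ ?_ <;> simp [Matrix.single]
  conv_lhs => rw [hA]
  simp only [map_add, LinearMap.map_smul, smul_eq_mul]

/-- every kernel of a functional contains an invertible matrix -/
lemma exists_unit_in_ker (φ : M2 F →ₗ[F] F) :
    ∃ A : M2 F, φ A = 0 ∧ IsUnit A.det := by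
  by_cases h11 : φ (Matrix.single 1 1 1) ≠ 0
  · refine ⟨!![0, 1; -1, (φ (Matrix.single 1 0 1) - φ (Matrix.single 0 1 1))/φ (Matrix.single 1 1 1)], ?_, ?_⟩
    · rw [phi_expand]
      simp
      field_simp
      ring
    · rw [Matrix.det_fin_two]
      simp
  · push_neg at h11
    by_cases h00 : φ (Matrix.single 0 0 1) ≠ 0
    · refine ⟨!![(φ (Matrix.single 1 0 1) - φ (Matrix.single 0 1 1))/φ (Matrix.single 0 0 1), 1; -1, 0], ?_, ?_⟩
      · rw [phi_expand]
        simp [h11]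
        field_simp
        ring
      · rw [Matrix.det_fin_two]
        simp
    · push_neg at h00
      refine ⟨1, ?_, ?_⟩
      · rw [phi_expand]
        have e00 : (1 : M2 F) 0 0 = 1 := rfl
        have e01 : (1 : M2 F) 0 1 = 0 := rfl
        have e10 : (1 : M2 F) 1 0 = 0 := rfl
        have e11 : (1 : M2 F) 1 1 = 1 := rfl
        rw [e00, e01, e10, e11, h00, h11]
        ring
      · simp
/-- a functional vanishing on all u wᵀ has the form s ⊗ w⊥ -/
lemma form_vanish_right {φ : M2 F →ₗ[F] F} {w : Fin 2 → F} (hw : w ≠ 0)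
    (h : ∀ u, φ (vecMulVec u w) = 0) :
    ∃ s : Fin 2 → F, ∀ A, φ A = bform s ![w 1, -w 0] A := by
  set wp : Fin 2 → F := ![w 1, -w 0] with hwp
  have hwpne : wp ≠ 0 := by
    intro h0
    apply hw
    have e0 := congrFun h0 0
    have e1 := congrFun h0 1
    simp [hwp] at e0 e1
    exact vec2_ext (by simpa using e1) (by simpa using e0)
  have key : ∀ k : Fin 2, ∃ sk : F,
      φ (Matrix.single k 0 1) = sk * wp 0 ∧ φ (Matrix.single k 1 1) = sk * wp 1 := by
    intro k
    have hv := h (Pi.single k 1)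
    have hexp : vecMulVec (Pi.single k (1:F)) w
        = w 0 • Matrix.single k 0 1 + w 1 • Matrix.single k 1 1 := by
      ext i j
      by_cases hik : i = k
      · subst hik
        fin_cases j <;> simp [vecMulVec_apply, Matrix.single]
      · fin_cases j <;>
          simp [vecMulVec_apply, Matrix.single, Pi.single_apply, Ne.symm hik, hik]
    rw [hexp, map_add, _root_.map_smul, _root_.map_smul] at hv
    -- (φ Ek0, φ Ek1) ⬝ w = 0 hence parallel to wp
    have hcp : cp ![φ (Matrix.single k 0 1), φ (Matrix.single k 1 1)] wp = 0 := by
      simp [cp, hwp]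
      simp at hv
      linear_combination -hv
    obtain ⟨sk, hsk⟩ := cp_eq_zero_parallel hwpne hcp
    have e0 := congrFun hsk 0
    have e1 := congrFun hsk 1
    simp at e0 e1
    exact ⟨sk, e0, e1⟩
  obtain ⟨s0, hs00, hs01⟩ := key 0
  obtain ⟨s1, hs10, hs11⟩ := key 1
  refine ⟨![s0, s1], fun A => ?_⟩
  rw [phi_expand φ A, hs00, hs01, hs10, hs11]
  simp [bform, hwp]
  ring

/-- a functional vanishing on all v uᵀ has the form v⊥ ⊗ y -/
lemma form_vanish_left {φ : M2 F →ₗ[F] F} {v : Fin 2 → F} (hv : v ≠ 0)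
    (h : ∀ u, φ (vecMulVec v u) = 0) :
    ∃ y : Fin 2 → F, ∀ A, φ A = bform ![v 1, -v 0] y A := by
  set vp : Fin 2 → F := ![v 1, -v 0] with hvp
  have hvpne : vp ≠ 0 := by
    intro h0
    apply hv
    have e0 := congrFun h0 0
    have e1 := congrFun h0 1
    simp [hvp] at e0 e1
    exact vec2_ext (by simpa using e1) (by simpa using e0)
  have key : ∀ l : Fin 2, ∃ yl : F,
      φ (Matrix.single 0 l 1) = vp 0 * yl ∧ φ (Matrix.single 1 l 1) = vp 1 * yl := by
    intro l
    have hveq := h (Pi.single l 1)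
    have hexp : vecMulVec v (Pi.single l (1:F))
        = v 0 • Matrix.single 0 l 1 + v 1 • Matrix.single 1 l 1 := by
      ext i j
      by_cases hjl : j = l
      · subst hjl
        fin_cases i <;> simp [vecMulVec_apply, Matrix.single]
      · fin_cases i <;>
          simp [vecMulVec_apply, Matrix.single, Pi.single_apply, Ne.symm hjl, hjl]
    rw [hexp, map_add, _root_.map_smul, _root_.map_smul] at hveq
    have hcp : cp ![φ (Matrix.single 0 l 1), φ (Matrix.single 1 l 1)] vp = 0 := by
      simp [cp, hvp]
      simp at hveq
      linear_combination -hveq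
    obtain ⟨yl, hyl⟩ := cp_eq_zero_parallel hvpne hcp
    have e0 := congrFun hyl 0
    have e1 := congrFun hyl 1
    simp at e0 e1
    exact ⟨yl, by rw [e0]; ring, by rw [e1]; ring⟩
  obtain ⟨y0, h00, h10⟩ := key 0
  obtain ⟨y1, h01, h11⟩ := key 1
  refine ⟨![y0, y1], fun A => ?_⟩
  rw [phi_expand φ A, h00, h01, h10, h11]
  simp [bform, hvp]
  ring

lemma bform_E (s z : Fin 2 → F) (k l : Fin 2) :
    bform s z (Matrix.single k l 1) = s k * z l := by
  fin_cases k <;> fin_cases l <;> simp [bform, Matrix.single]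

lemma bform_unique {s z s' z' : Fin 2 → F} (h : ∀ A : M2 F, bform s z A = bform s' z' A)
    (hs : s ≠ 0) (hz : z ≠ 0) :
    ∃ lam : F, lam ≠ 0 ∧ s' = lam • s ∧ lam • z' = z := by
  have houter : vecMulVec s z = vecMulVec s' z' := by
    refine mat2_ext ?_ ?_ ?_ ?_ <;>
    · simp only [vecMulVec_apply]
      rw [← bform_E s z, ← bform_E s' z']
      exact h _
  exact outer_eq_outer houter hs hz

/-- `f j` and `f k` are both of the form  s ᵀ(A z)  with a common right vector z -/
def FR (f : Fin 6 → (M2 F →ₗ[F] F)) (j k : Fin 6) : Prop :=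
  ∃ z s t : Fin 2 → F, z ≠ 0 ∧ s ≠ 0 ∧ t ≠ 0 ∧
    (∀ A, f j A = bform s z A) ∧ (∀ A, f k A = bform t z A)

/-- `g j` and `g k` are both of the form  xᵀ(B y)  with a common left vector x -/
def GC (g : Fin 6 → (M2 F →ₗ[F] F)) (j k : Fin 6) : Prop :=
  ∃ x y y' : Fin 2 → F, x ≠ 0 ∧ y ≠ 0 ∧ y' ≠ 0 ∧
    (∀ B, g j B = bform x y B) ∧ (∀ B, g k B = bform x y' B)

theorem lemD {f g : Fin 6 → (M2 F →ₗ[F] F)} {C : Fin 6 → M2 F}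
    (hd : Decomp f g C) (h : ∀ j k : Fin 6, j ≠ k → FR f j k ∨ GC g j k) : False := by
  by_cases hall : ∀ j k : Fin 6, j ≠ k → GC g j k
  · -- all pairs share a common left vector for g
    obtain ⟨x, y0, y1, hx, hy0, hy1, hg0, hg1⟩ := hall 0 1 (by decide)
    have hforms : ∀ i : Fin 6, ∃ y, ∀ B, g i B = bform x y B := by
      intro i
      by_cases hi0 : i = 0
      · exact ⟨y0, by rw [hi0]; exact hg0⟩
      by_cases hi1 : i = 1
      · exact ⟨y1, by rw [hi1]; exact hg1⟩
      obtain ⟨x', yy0, yyi, hx', hyy0, hyyi, hg0', hgi'⟩ := hall 0 i (Ne.symm hi0)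
      obtain ⟨lam, hlam, hxeq, -⟩ :=
        bform_unique (s := x) (z := y0) (s' := x') (z' := yy0)
          (fun B => by rw [← hg0 B, ← hg0' B]) hx hy0
      refine ⟨lam • yyi, fun B => ?_⟩
      rw [hgi' B, hxeq, ← bform_smul_move]
    have hkill : ∀ i, g i (vecMulVec ![x 1, -x 0] ![1, 0]) = 0 := by
      intro i
      obtain ⟨y, hy⟩ := hforms i
      rw [hy, bform_outer]
      have : x 0 * (![x 1, -x 0] : Fin 2 → F) 0 + x 1 * (![x 1, -x 0] : Fin 2 → F) 1 = 0 := by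
        simp; ring
      rw [this, zero_mul]
    have hB0 := span_g hd hkill
    have h00 := congrFun (congrFun hB0 0) 0
    have h10 := congrFun (congrFun hB0 1) 0
    simp [vecMulVec_apply] at h00 h10
    exact vec2_ne_zero hx |>.elim (fun hh => hh h10) (fun hh => hh h00)
  · push_neg at hall
    obtain ⟨a, b, hab, hnGC⟩ := hall
    have hFRab := (h a b hab).resolve_right hnGC
    obtain ⟨z, sa, sb, hz, hsa, hsb, hfa, hfb⟩ := hFRab
    have hforms : ∀ i : Fin 6, ∃ s, ∀ A, f i A = bform s z A := by
      intro i
      by_cases hia : i = a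
      · exact ⟨sa, by rw [hia]; exact hfa⟩
      by_cases hib : i = b
      · exact ⟨sb, by rw [hib]; exact hfb⟩
      rcases h a i (Ne.symm hia) with hfr | hgc
      · obtain ⟨z', sa', si, hz', hsa', hsi, hfa', hfi⟩ := hfr
        obtain ⟨lam, hlam, -, hzeq⟩ :=
          bform_unique (s := sa) (z := z) (s' := sa') (z' := z')
            (fun A => by rw [← hfa A, ← hfa' A]) hsa hz
        have hz'eq : z' = lam⁻¹ • z := by
          rw [← hzeq, smul_smul, inv_mul_cancel₀ hlam, one_smul]
        refine ⟨lam⁻¹ • si, fun A => ?_⟩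
        rw [hfi A, hz'eq, bform_smul_move]
      rcases h b i (Ne.symm hib) with hfr | hgc'
      · obtain ⟨z', sb', si, hz', hsb', hsi, hfb', hfi⟩ := hfr
        obtain ⟨lam, hlam, -, hzeq⟩ :=
          bform_unique (s := sb) (z := z) (s' := sb') (z' := z')
            (fun A => by rw [← hfb A, ← hfb' A]) hsb hz
        have hz'eq : z' = lam⁻¹ • z := by
          rw [← hzeq, smul_smul, inv_mul_cancel₀ hlam, one_smul]
        refine ⟨lam⁻¹ • si, fun A => ?_⟩
        rw [hfi A, hz'eq, bform_smul_move]
      · -- both GC a i and GC b i : then GC a b, contradiction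
        exfalso
        obtain ⟨x1, ya, yi, hx1, hya, hyi, hga, hgi⟩ := hgc
        obtain ⟨x2, yb, yi', hx2, hyb, hyi', hgb, hgi'⟩ := hgc'
        obtain ⟨lam, hlam, hxeq, -⟩ :=
          bform_unique (s := x1) (z := yi) (s' := x2) (z' := yi')
            (fun B => by rw [← hgi B, ← hgi' B]) hx1 hyi
        refine hnGC ⟨x1, ya, lam • yb, hx1, hya, smul_ne_zero hlam hyb, hga, fun B => ?_⟩
        rw [hgb B, hxeq, ← bform_smul_move]
    have hkill : ∀ i, f i (vecMulVec ![1, 0] ![z 1, -z 0]) = 0 := by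
      intro i
      obtain ⟨s, hs⟩ := hforms i
      rw [hs, bform_outer]
      have : (![z 1, -z 0] : Fin 2 → F) 0 * z 0 + (![z 1, -z 0] : Fin 2 → F) 1 * z 1 = 0 := by
        simp; ring
      rw [this, mul_zero]
    have hA0 := span_f hd hkill
    have h00 := congrFun (congrFun hA0 0) 0
    have h01 := congrFun (congrFun hA0 0) 1
    simp [vecMulVec_apply] at h00 h01
    exact vec2_ne_zero hz |>.elim (fun hh => hh h01) (fun hh => hh h00)

lemma exists_perm45 (j k : Fin 6) (h : j ≠ k) :
    ∃ σ : Equiv.Perm (Fin 6), σ 4 = j ∧ σ 5 = k := by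
  set τ := Equiv.swap (4 : Fin 6) j with hτ
  set ρ := Equiv.swap (5 : Fin 6) (τ.symm k) with hρ
  refine ⟨ρ.trans τ, ?_, ?_⟩
  · show τ (ρ 4) = j
    have h45 : (4 : Fin 6) ≠ 5 := by decide
    have h4k : (4 : Fin 6) ≠ τ.symm k := by
      intro hh
      have : τ 4 = k := by rw [hh]; exact τ.apply_symm_apply k
      rw [hτ, Equiv.swap_apply_left] at this
      exact h this
    rw [hρ, Equiv.swap_apply_of_ne_of_ne h45 h4k, hτ, Equiv.swap_apply_left]
  · show τ (ρ 5) = k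
    rw [hρ, Equiv.swap_apply_left, Equiv.apply_symm_apply]

/-- The main assembly: no 6-term decomposition exists. -/
theorem not_decomp6 (f g : Fin 6 → (M2 F →ₗ[F] F)) (C : Fin 6 → M2 F)
    (hd : Decomp f g C) : False := by
  apply lemD hd
  intro j k hjk
  obtain ⟨σ, hσ4, hσ5⟩ := exists_perm45 j k hjk
  have hd' := hd.perm σ
  by_cases hfInv : ∃ A : M2 F, f j A = 0 ∧ f k A = 0 ∧ IsUnit A.det
  · by_cases hgInv : ∃ B : M2 F, g j B = 0 ∧ g k B = 0 ∧ IsUnit B.det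
    · exfalso
      obtain ⟨A₀, hfj, hfk, hAu⟩ := hfInv
      obtain ⟨B₀, hgj, hgk, hBu⟩ := hgInv
      refine lemB hd' A₀ B₀ hAu hBu ?_ ?_ ?_ ?_
      · show f (σ 4) A₀ = 0; rw [hσ4]; exact hfj
      · show f (σ 5) A₀ = 0; rw [hσ5]; exact hfk
      · show g (σ 4) B₀ = 0; rw [hσ4]; exact hgj
      · show g (σ 5) B₀ = 0; rw [hσ5]; exact hgk
    · -- g-side kernel pair is singular
      push_neg at hgInv
      obtain ⟨X, Y, hXj, hXk, hYj, hYk, hli⟩ := ker2_li2 (g j) (g k)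
      have hli' := li2_concrete hli
      have hsing : ∀ a b : F, ((a • X + b • Y) : M2 F).det = 0 := by
        intro a b
        have h1 : g j (a • X + b • Y) = 0 := by
          rw [map_add, _root_.map_smul, _root_.map_smul, hXj, hYj]; simp
        have h2 : g k (a • X + b • Y) = 0 := by
          rw [map_add, _root_.map_smul, _root_.map_smul, hXk, hYk]; simp
        by_contra hdet
        exact hgInv _ h1 h2 (isUnit_iff_ne_zero.mpr hdet)
      have hgj_ne : ¬ (∀ B, g j B = 0) := by
        intro hc
        obtain ⟨A, hA0, hAu⟩ := exists_unit_in_ker (g k)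
        exact hgInv A (hc A) hA0 hAu
      have hgk_ne : ¬ (∀ B, g k B = 0) := by
        intro hc
        obtain ⟨A, hA0, hAu⟩ := exists_unit_in_ker (g j)
        exact hgInv A hA0 (hc A) hAu
      rcases sing_classify hli' hsing with ⟨v, hv, hplane⟩ | ⟨w, hw, hplane⟩
      · -- type C on the g side : GC data
        right
        have hvanj : ∀ u, g j (vecMulVec v u) = 0 := by
          intro u
          obtain ⟨a, b, hab⟩ := hplane u
          rw [hab, map_add, _root_.map_smul, _root_.map_smul, hXj, hYj]; simp
        have hvank : ∀ u, g k (vecMulVec v u) = 0 := by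
          intro u
          obtain ⟨a, b, hab⟩ := hplane u
          rw [hab, map_add, _root_.map_smul, _root_.map_smul, hXk, hYk]; simp
        obtain ⟨yj, hyj⟩ := form_vanish_left hv hvanj
        obtain ⟨yk, hyk⟩ := form_vanish_left hv hvank
        have hyjne : yj ≠ 0 := by
          intro h0
          exact hgj_ne (fun B => by rw [hyj B, h0, bform_zero_right])
        have hykne : yk ≠ 0 := by
          intro h0
          exact hgk_ne (fun B => by rw [hyk B, h0, bform_zero_right])
        have hvp : (![v 1, -v 0] : Fin 2 → F) ≠ 0 := by
          intro h0
          have e0 := congrFun h0 0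
          have e1 := congrFun h0 1
          simp at e0 e1
          exact hv (vec2_ext (by simpa using e1) (by simpa using e0))
        exact ⟨![v 1, -v 0], yj, yk, hvp, hyjne, hykne, hyj, hyk⟩
      · -- type R on the g side : impossible by (transposed) Lemma A
        exfalso
        have hdT := hd.transpose
        have hdT' := hdT.perm σ
        refine lemA hdT' w hw ?_ ?_
        · intro u
          show ((g (σ 4)).comp tLM) (vecMulVec w u) = 0
          rw [hσ4]
          show g j ((vecMulVec w u)ᵀ) = 0
          rw [vecMulVec_transpose]
          obtain ⟨a, b, hab⟩ := hplane u
          rw [hab, map_add, _root_.map_smul, _root_.map_smul, hXj, hYj]; simp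
        · intro u
          show ((g (σ 5)).comp tLM) (vecMulVec w u) = 0
          rw [hσ5]
          show g k ((vecMulVec w u)ᵀ) = 0
          rw [vecMulVec_transpose]
          obtain ⟨a, b, hab⟩ := hplane u
          rw [hab, map_add, _root_.map_smul, _root_.map_smul, hXk, hYk]; simp
  · -- f-side kernel pair is singular
    push_neg at hfInv
    obtain ⟨X, Y, hXj, hXk, hYj, hYk, hli⟩ := ker2_li2 (f j) (f k)
    have hli' := li2_concrete hli
    have hsing : ∀ a b : F, ((a • X + b • Y) : M2 F).det = 0 := by
      intro a b
      have h1 : f j (a • X + b • Y) = 0 := by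
        rw [map_add, _root_.map_smul, _root_.map_smul, hXj, hYj]; simp
      have h2 : f k (a • X + b • Y) = 0 := by
        rw [map_add, _root_.map_smul, _root_.map_smul, hXk, hYk]; simp
      by_contra hdet
      exact hfInv _ h1 h2 (isUnit_iff_ne_zero.mpr hdet)
    have hfj_ne : ¬ (∀ A, f j A = 0) := by
      intro hc
      obtain ⟨A, hA0, hAu⟩ := exists_unit_in_ker (f k)
      exact hfInv A (hc A) hA0 hAu
    have hfk_ne : ¬ (∀ A, f k A = 0) := by
      intro hc
      obtain ⟨A, hA0, hAu⟩ := exists_unit_in_ker (f j)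
      exact hfInv A hA0 (hc A) hAu
    rcases sing_classify hli' hsing with ⟨v, hv, hplane⟩ | ⟨w, hw, hplane⟩
    · -- type C on the f side : impossible by Lemma A
      exfalso
      refine lemA hd' v hv ?_ ?_
      · intro u
        show f (σ 4) (vecMulVec v u) = 0
        rw [hσ4]
        obtain ⟨a, b, hab⟩ := hplane u
        rw [hab, map_add, _root_.map_smul, _root_.map_smul, hXj, hYj]; simp
      · intro u
        show f (σ 5) (vecMulVec v u) = 0
        rw [hσ5]
        obtain ⟨a, b, hab⟩ := hplane u
        rw [hab, map_add, _root_.map_smul, _root_.map_smul, hXk, hYk]; simp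
    · -- type R on the f side : FR data
      left
      have hvanj : ∀ u, f j (vecMulVec u w) = 0 := by
        intro u
        obtain ⟨a, b, hab⟩ := hplane u
        rw [hab, map_add, _root_.map_smul, _root_.map_smul, hXj, hYj]; simp
      have hvank : ∀ u, f k (vecMulVec u w) = 0 := by
        intro u
        obtain ⟨a, b, hab⟩ := hplane u
        rw [hab, map_add, _root_.map_smul, _root_.map_smul, hXk, hYk]; simp
      obtain ⟨sj, hsj⟩ := form_vanish_right hw hvanj
      obtain ⟨sk, hsk⟩ := form_vanish_right hw hvank
      have hsjne : sj ≠ 0 := by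
        intro h0
        exact hfj_ne (fun A => by rw [hsj A, h0, bform_zero_left])
      have hskne : sk ≠ 0 := by
        intro h0
        exact hfk_ne (fun A => by rw [hsk A, h0, bform_zero_left])
      have hwp : (![w 1, -w 0] : Fin 2 → F) ≠ 0 := by
        intro h0
        have e0 := congrFun h0 0
        have e1 := congrFun h0 1
        simp at e0 e1
        exact hw (vec2_ext (by simpa using e1) (by simpa using e0))
      exact ⟨![w 1, -w 0], sj, sk, hwp, hsjne, hskne, hsj, hsk⟩


/-- the linear functional with coefficient matrix G -/
def sLin (G : Matrix (Fin 2) (Fin 2) F) : Matrix (Fin 2) (Fin 2) F →ₗ[F] F where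
  toFun := fun A => G 0 0 * A 0 0 + G 0 1 * A 0 1 + G 1 0 * A 1 0 + G 1 1 * A 1 1
  map_add' := by intros; simp [Matrix.add_apply]; ring
  map_smul' := by intros; simp [Matrix.smul_apply]; ring

theorem strassen : HasBilinearAlgo F 2 2 2 7 := by
  refine ⟨![sLin !![1,0;0,1], sLin !![0,0;1,1], sLin !![1,0;0,0], sLin !![0,0;0,1],
            sLin !![1,1;0,0], sLin !![-1,0;1,0], sLin !![0,1;0,-1]],
          ![sLin !![1,0;0,1], sLin !![1,0;0,0], sLin !![0,1;0,-1], sLin !![-1,0;1,0],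
            sLin !![0,0;0,1], sLin !![1,1;0,0], sLin !![0,0;1,1]],
          ![!![1,0;0,1], !![0,0;1,-1], !![0,1;0,1], !![1,0;1,0],
            !![-1,1;0,0], !![0,0;0,1], !![1,0;0,0]], ?_⟩
  intro A B
  ext i j
  rw [Fin.sum_univ_seven]
  have hf5 : (![sLin !![1,0;0,1], sLin !![0,0;1,1], sLin !![1,0;0,0], sLin !![0,0;0,1],
            sLin !![1,1;0,0], sLin !![-1,0;1,0], sLin !![0,1;0,-1]] : Fin 7 → (Matrix (Fin 2) (Fin 2) F →ₗ[F] F)) 5 = sLin !![-1,0;1,0] := rfl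
  have hf6 : (![sLin !![1,0;0,1], sLin !![0,0;1,1], sLin !![1,0;0,0], sLin !![0,0;0,1],
            sLin !![1,1;0,0], sLin !![-1,0;1,0], sLin !![0,1;0,-1]] : Fin 7 → (Matrix (Fin 2) (Fin 2) F →ₗ[F] F)) 6 = sLin !![0,1;0,-1] := rfl
  have hg5 : (![sLin !![1,0;0,1], sLin !![1,0;0,0], sLin !![0,1;0,-1], sLin !![-1,0;1,0],
            sLin !![0,0;0,1], sLin !![1,1;0,0], sLin !![0,0;1,1]] : Fin 7 → (Matrix (Fin 2) (Fin 2) F →ₗ[F] F)) 5 = sLin !![1,1;0,0] := rfl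
  have hg6 : (![sLin !![1,0;0,1], sLin !![1,0;0,0], sLin !![0,1;0,-1], sLin !![-1,0;1,0],
            sLin !![0,0;0,1], sLin !![1,1;0,0], sLin !![0,0;1,1]] : Fin 7 → (Matrix (Fin 2) (Fin 2) F →ₗ[F] F)) 6 = sLin !![0,0;1,1] := rfl
  have hc5 : (![!![1,0;0,1], !![0,0;1,-1], !![0,1;0,1], !![1,0;1,0],
            !![-1,1;0,0], !![0,0;0,1], !![1,0;0,0]] : Fin 7 → Matrix (Fin 2) (Fin 2) F) 5 = !![0,0;0,1] := rfl
  have hc6 : (![!![1,0;0,1], !![0,0;1,-1], !![0,1;0,1], !![1,0;1,0],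
            !![-1,1;0,0], !![0,0;0,1], !![1,0;0,0]] : Fin 7 → Matrix (Fin 2) (Fin 2) F) 6 = !![1,0;0,0] := rfl
  rw [hf5, hf6, hg5, hg6, hc5, hc6]
  fin_cases i <;> fin_cases j <;>
    simp [Matrix.mul_apply, Fin.sum_univ_two, sLin, Matrix.add_apply, Matrix.smul_apply] <;>
    ring

theorem has_succ {r : ℕ} (h : HasBilinearAlgo F 2 2 2 r) :
    HasBilinearAlgo F 2 2 2 (r + 1) := by
  obtain ⟨f, g, C, hd⟩ := h
  refine ⟨Fin.snoc f 0, Fin.snoc g 0, Fin.snoc C 0, ?_⟩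
  intro A B
  rw [Fin.sum_univ_castSucc]
  simp only [Fin.snoc_castSucc, Fin.snoc_last]
  simp [hd A B]

theorem has_mono {r s : ℕ} (hrs : r ≤ s) (h : HasBilinearAlgo F 2 2 2 r) :
    HasBilinearAlgo F 2 2 2 s := by
  induction s, hrs using Nat.le_induction with
  | base => exact h
  | succ n hn ih => exact has_succ ih

theorem no6 : ¬ HasBilinearAlgo F 2 2 2 6 := by
  rintro ⟨f, g, C, hd⟩
  exact not_decomp6 f g C hd

end W222

theorem rank_222_eq_7 (F : Type*) [Field F] :
    7 ≤ matMulRank F 2 2 2 ∧ matMulRank F 2 2 2 = 7 := by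
  have h7 : HasBilinearAlgo F 2 2 2 7 := W222.strassen
  have hlow : 7 ≤ matMulRank F 2 2 2 := by
    refine le_csInf ⟨7, h7⟩ ?_
    intro r hr
    by_contra hlt
    push_neg at hlt
    have h6 : HasBilinearAlgo F 2 2 2 6 := W222.has_mono (by omega) hr
    exact W222.no6 h6
  exact ⟨hlow, le_antisymm (Nat.sInf_le h7) hlow⟩
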